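/- For every binary pattern p of length m and every k ≥ 1, any binary word w that is primitive with respect to p and satisfies c_p(w) = k has length at most m + (k−1)·m; in particular, the set prim_{n,p}(k) of primitive words of length at most n with exactly k occurrences of p is finite, and B_{n,p}(k) = Σ_{w ∈ prim_{n,p}(k)} (number of words of length n whose primitive reduction with respect to p equals w). -/

import Mathlib

/-- An occurrence of the pattern `p` in the word `w`: a strictly increasing
index tuple whose corresponding subsequence of `w` equals `p`. -/
def Occ (p w : List Bool) : Type :=
  {f : Fin p.length → Fin w.length // StrictMono f ∧ ∀ j, w.get (f j) = p.get j}

/-- `numOcc p w` is `c_p(w)`, the number of occurrences of `p` in `w`. -/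
noncomputable def numOcc (p w : List Bool) : ℕ := Nat.card (Occ p w)

/-- `w` is primitive with respect to `p` if every index of `w` is contained in
some occurrence of `p` in `w`. -/
def Primitive (p w : List Bool) : Prop :=
  ∀ i : Fin w.length, ∃ g : Occ p w, ∃ j, g.1 j = i

open Classical in
/-- The primitive reduction of `w` with respect to `p`: delete all indices of `w`
not contained in any occurrence of `p`. -/
noncomputable def reduce (p w : List Bool) : List Bool :=
  (((List.finRange w.length).filter
    fun i => decide (∃ g : Occ p w, ∃ j, g.1 j = i)).map w.get)

open Classical in
/-- The list of indices of `w` contained in some occurrence of `p`. -/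
noncomputable def idxList (p v : List Bool) : List (Fin v.length) :=
  (List.finRange v.length).filter fun i => decide (∃ g : Occ p v, ∃ j, g.1 j = i)

lemma reduce_eq (p v : List Bool) : reduce p v = (idxList p v).map v.get := rfl

lemma lenR (p v : List Bool) : (reduce p v).length = (idxList p v).length := by
  rw [reduce_eq, List.length_map]

lemma mem_idxList {p v : List Bool} {i : Fin v.length} :
    i ∈ idxList p v ↔ ∃ g : Occ p v, ∃ j, g.1 j = i := by
  simp [idxList]

lemma idxList_sorted (p v : List Bool) : (idxList p v).Pairwise (· < ·) :=
  List.Pairwise.sublist List.filter_sublist (List.pairwise_lt_finRange _)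

lemma idxList_nodup (p v : List Bool) : (idxList p v).Nodup :=
  (idxList_sorted p v).imp ne_of_lt

lemma reduce_get {p v : List Bool} (t : Fin (reduce p v).length) :
    (reduce p v).get t = v.get ((idxList p v).get (Fin.cast (lenR p v) t)) := by
  rcases t with ⟨t, ht⟩
  simp [reduce_eq, List.get_eq_getElem]
  rfl

lemma mem_of_occ {p v : List Bool} (g : Occ p v) (j : Fin p.length) :
    g.1 j ∈ idxList p v :=
  mem_idxList.2 ⟨g, j, rfl⟩

open Classical in
/-- Lift an occurrence of `p` in `v` to an occurrence of `p` in `reduce p v`. -/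
noncomputable def liftOcc {p v : List Bool} (g : Occ p v) : Occ p (reduce p v) :=
  ⟨fun j => Fin.cast (lenR p v).symm
      ⟨(idxList p v).idxOf (g.1 j), List.idxOf_lt_length_iff.2 (mem_of_occ g j)⟩,
   by
    have hget : ∀ j, (idxList p v).get
        ⟨(idxList p v).idxOf (g.1 j), List.idxOf_lt_length_iff.2 (mem_of_occ g j)⟩ = g.1 j :=
      fun j => List.idxOf_get _
    have hmono : StrictMono (idxList p v).get := (idxList_sorted p v).sortedLT.strictMono_get
    constructor
    · intro j j' hjj
      have : g.1 j < g.1 j' := g.2.1 hjj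
      rw [← hget j, ← hget j'] at this
      exact hmono.lt_iff_lt.1 this
    · intro j
      rw [reduce_get]
      have : Fin.cast (lenR p v) (Fin.cast (lenR p v).symm
          ⟨(idxList p v).idxOf (g.1 j), List.idxOf_lt_length_iff.2 (mem_of_occ g j)⟩) =
          ⟨(idxList p v).idxOf (g.1 j), List.idxOf_lt_length_iff.2 (mem_of_occ g j)⟩ :=
        Fin.ext rfl
      rw [this, hget j, g.2.2 j]⟩

/-- Push an occurrence of `p` in `reduce p v` down to an occurrence of `p` in `v`. -/
noncomputable def pushOcc {p v : List Bool} (f : Occ p (reduce p v)) : Occ p v :=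
  ⟨fun j => (idxList p v).get (Fin.cast (lenR p v) (f.1 j)),
   by
    have hmono : StrictMono (idxList p v).get := (idxList_sorted p v).sortedLT.strictMono_get
    constructor
    · intro j j' hjj
      exact hmono (f.2.1 hjj)
    · intro j
      rw [← reduce_get, f.2.2 j]⟩

open Classical in
lemma push_lift {p v : List Bool} (g : Occ p v) : pushOcc (liftOcc g) = g := by
  apply Subtype.ext; funext j
  exact List.idxOf_get _

open Classical in
lemma lift_push {p v : List Bool} (f : Occ p (reduce p v)) : liftOcc (pushOcc f) = f := by
  apply Subtype.ext; funext j
  apply Fin.ext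
  show (idxList p v).idxOf ((idxList p v).get (Fin.cast (lenR p v) (f.1 j))) = (f.1 j : ℕ)
  rw [List.get_idxOf (idxList_nodup p v)]
  rfl

lemma numOcc_reduce (p v : List Bool) : numOcc p (reduce p v) = numOcc p v :=
  Nat.card_congr ⟨pushOcc, liftOcc, lift_push, push_lift⟩

lemma primitive_reduce (p v : List Bool) : Primitive p (reduce p v) := by
  classical
  intro t
  have hmem : (idxList p v).get (Fin.cast (lenR p v) t) ∈ idxList p v :=
    (idxList p v).get_mem _
  obtain ⟨g, j, hj⟩ := mem_idxList.1 hmem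
  refine ⟨liftOcc g, j, ?_⟩
  apply Fin.ext
  show (idxList p v).idxOf (g.1 j) = (t : ℕ)
  rw [hj]
  have := List.get_idxOf (idxList_nodup p v) (Fin.cast (lenR p v) t)
  exact this

lemma reduce_length_le (p v : List Bool) : (reduce p v).length ≤ v.length := by
  rw [lenR]
  exact le_trans (List.length_filter_le _ _) (le_of_eq List.length_finRange)

instance occFinite (p w : List Bool) : Finite (Occ p w) := by
  unfold Occ; infer_instance

lemma length_le_of_primitive {p w : List Bool} (hprim : Primitive p w) :
    w.length ≤ numOcc p w * p.length := by
  classical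
  haveI := Fintype.ofFinite (Occ p w)
  rw [numOcc, Nat.card_eq_fintype_card]
  have hsub : (Finset.univ : Finset (Fin w.length)) ⊆
      Finset.univ.biUnion fun g : Occ p w => Finset.univ.image g.1 := by
    intro i _
    obtain ⟨g, j, hj⟩ := hprim i
    exact Finset.mem_biUnion.2 ⟨g, Finset.mem_univ _, Finset.mem_image.2 ⟨j, Finset.mem_univ _, hj⟩⟩
  calc w.length = (Finset.univ : Finset (Fin w.length)).card := by simp
    _ ≤ (Finset.univ.biUnion fun g : Occ p w => Finset.univ.image g.1).card :=
        Finset.card_le_card hsub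
    _ ≤ ∑ g : Occ p w, (Finset.univ.image g.1).card := Finset.card_biUnion_le
    _ ≤ ∑ _g : Occ p w, p.length :=
        Finset.sum_le_sum fun g _ => le_trans Finset.card_image_le (by simp)
    _ = Fintype.card (Occ p w) * p.length := by
        rw [Finset.sum_const, smul_eq_mul, Finset.card_univ]

theorem stmt18 (p : List Bool) (k : ℕ) (hk : 1 ≤ k) (n : ℕ) :
    (∀ w : List Bool, Primitive p w → numOcc p w = k →
      w.length ≤ p.length + (k - 1) * p.length) ∧
    ∃ hfin : {w : List Bool | w.length ≤ n ∧ numOcc p w = k ∧ Primitive p w}.Finite,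
      Nat.card {v : List Bool // v.length = n ∧ numOcc p v = k} =
        ∑ w ∈ hfin.toFinset,
          Nat.card {v : List Bool // v.length = n ∧ reduce p v = w} := by
  classical
  constructor
  · intro w hprim hcnt
    obtain ⟨k', rfl⟩ : ∃ k', k = 1 + k' := ⟨k - 1, by omega⟩
    have h := length_le_of_primitive hprim
    rw [hcnt] at h
    calc w.length ≤ (1 + k') * p.length := h
      _ = p.length + k' * p.length := by ring
      _ = p.length + (1 + k' - 1) * p.length := by simp
  · have hfin : {w : List Bool | w.length ≤ n ∧ numOcc p w = k ∧ Primitive p w}.Finite :=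
      (List.finite_length_le Bool n).subset fun w hw => hw.1
    refine ⟨hfin, ?_⟩
    have hT : {v : List Bool | v.length = n ∧ numOcc p v = k}.Finite :=
      (List.finite_length_eq Bool n).subset fun v hv => hv.1
    have key : ∀ v ∈ hT.toFinset, reduce p v ∈ hfin.toFinset := by
      intro v hv
      rw [Set.Finite.mem_toFinset] at hv ⊢
      obtain ⟨hlen, hcnt⟩ := hv
      exact ⟨le_trans (reduce_length_le p v) (le_of_eq hlen),
        by rw [numOcc_reduce]; exact hcnt, primitive_reduce p v⟩
    have h1 : Nat.card {v : List Bool // v.length = n ∧ numOcc p v = k} = hT.toFinset.card := by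
      have : Nat.card ↥{v : List Bool | v.length = n ∧ numOcc p v = k} = hT.toFinset.card := by
        rw [Nat.card_coe_set_eq, Set.ncard_eq_toFinset_card _ hT]
      exact this
    rw [h1, Finset.card_eq_sum_card_fiberwise key]
    refine Finset.sum_congr rfl fun w hw => ?_
    rw [Set.Finite.mem_toFinset] at hw
    have hFw : {v : List Bool | v.length = n ∧ reduce p v = w}.Finite :=
      (List.finite_length_eq Bool n).subset fun v hv => hv.1
    have h2 : Nat.card {v : List Bool // v.length = n ∧ reduce p v = w} = hFw.toFinset.card := by
      have : Nat.card ↥{v : List Bool | v.length = n ∧ reduce p v = w} = hFw.toFinset.card := by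
        rw [Nat.card_coe_set_eq, Set.ncard_eq_toFinset_card _ hFw]
      exact this
    rw [h2]
    congr 1
    ext v
    simp only [Finset.mem_filter, Set.Finite.mem_toFinset, Set.mem_setOf_eq]
    constructor
    · rintro ⟨⟨hlen, _⟩, hred⟩; exact ⟨hlen, hred⟩
    · rintro ⟨hlen, hred⟩
      refine ⟨⟨hlen, ?_⟩, hred⟩
      rw [← numOcc_reduce p v, hred]
      exact hw.2.1
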